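/- Suppose the infinite word x is generated by a standard morphism ψ (i.e. x = ψ^ω(c) for some letter c). Let k ∈ ℕ with 0 ≤ k ≤ |ψ(ab)| − 2 and let v denote the prefix of x of length k. Then the k-th right conjugate ψ_k of ψ satisfies ψ_k(x) = v⁻¹x. -/

import Mathlib

/-- The two-letter alphabet 𝒜 = {a, b}. -/
inductive AB : Type
  | a : AB
  | b : AB
deriving DecidableEq, Repr

/-- Apply a morphism (determined by its images on the letters) to a finite word. -/
def applyM (g : AB → List AB) (w : List AB) : List AB := w.flatMap g

/-- The exchange morphism E : a ↦ b, b ↦ a. -/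
def Em : AB → List AB
  | AB.a => [AB.b]
  | AB.b => [AB.a]

/-- The morphism φ : a ↦ ab, b ↦ a. -/
def phim : AB → List AB
  | AB.a => [AB.a, AB.b]
  | AB.b => [AB.a]

/-- Composition of morphisms: `compM g h` applies `h` first, then `g`. -/
def compM (g h : AB → List AB) : AB → List AB := fun c => applyM g (h c)

/-- Powers of a morphism. -/
def mpow (g : AB → List AB) : ℕ → AB → List AB
  | 0 => fun c => [c]
  | n + 1 => compM g (mpow g n)

/-- A morphism is standard iff it is a composition of E and φ (in any number and order). -/
inductive IsStandard : (AB → List AB) → Prop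
  | id : IsStandard (fun c => [c])
  | compE {ψ : AB → List AB} : IsStandard ψ → IsStandard (compM ψ Em)
  | compPhi {ψ : AB → List AB} : IsStandard ψ → IsStandard (compM ψ phim)

/-- `IsRightConj ψ ξ k` : ξ is the k-th right conjugate of ψ, i.e. there is a word u
of length k with ψ(w)u = uξ(w) for all finite words w. -/
def IsRightConj (ψ ξ : AB → List AB) (k : ℕ) : Prop :=
  ∃ u : List AB, u.length = k ∧ ∀ w : List AB, applyM ψ w ++ u = u ++ applyM ξ w

/-- w^k (power of a finite word under concatenation). -/
def lpow (w : List AB) : ℕ → List AB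
  | 0 => []
  | k + 1 => w ++ lpow w k

/-- Standard sequence associated with a directive sequence (d₁, d₂, …) (here `d`
is indexed so that `d i` is dᵢ for i ≥ 1): `sseq d 0 = s₋₁ = b`, `sseq d (n+1) = sₙ`,
with s₀ = a and sₙ = sₙ₋₁^{dₙ} sₙ₋₂. -/
def sseq (d : ℕ → ℕ) : ℕ → List AB
  | 0 => [AB.b]
  | 1 => [AB.a]
  | n + 2 => lpow (sseq d (n + 1)) (d (n + 1)) ++ sseq d n

/-- Convergent denominators: `qseq d n` = qₙ = |sₙ| (q₀ = 1, q₁ = 1 + d₁,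
qₙ = dₙqₙ₋₁ + qₙ₋₂). -/
def qseq (d : ℕ → ℕ) : ℕ → ℕ
  | 0 => 1
  | 1 => 1 + d 1
  | n + 2 => d (n + 2) * qseq d (n + 1) + qseq d n

/-- `PrefInf u x` : the finite word u is a prefix of the infinite word x. -/
def PrefInf (u : List AB) (x : ℕ → AB) : Prop :=
  ∀ i, i < u.length → u.getD i AB.a = x i

/-- Image of an infinite word under a (non-erasing) morphism, letter by letter. -/
def applyInf (g : AB → List AB) (x : ℕ → AB) : ℕ → AB :=
  fun i => (applyM g ((List.range (i + 1)).map x)).getD i AB.a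

/-- `IsProdInf u x` : the infinite word x is the infinite product u 0 · u 1 · u 2 ⋯,
i.e. every finite partial product is a prefix of x. -/
def IsProdInf (u : ℕ → List AB) (x : ℕ → AB) : Prop :=
  ∀ n, PrefInf (((List.range n).map u).flatten) x

/-- Adjoining singular words: `vword d k` is the adjoining singular word v_{k-1}
(so `vword d 0 = v₋₁`), where vₙ = a·sₙ₊₁^{d_{n+2}−1}sₙ·b⁻¹ for n odd and
vₙ = b·sₙ₊₁^{d_{n+2}−1}sₙ·a⁻¹ for n even. -/
def vword (d : ℕ → ℕ) (k : ℕ) : List AB :=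
  (if k % 2 = 0 then AB.a else AB.b) ::
    (lpow (sseq d (k + 1)) (d (k + 1) - 1) ++ sseq d k).dropLast

/-- Singular words: `wword d k` is the singular word w_{k-2}
(w₋₂ = ε, w₋₁ = a, w₀ = b, and wₙ = a·sₙ·b⁻¹ for n ≥ 1 odd, wₙ = b·sₙ·a⁻¹ for n even). -/
def wword (d : ℕ → ℕ) : ℕ → List AB
  | 0 => []
  | 1 => [AB.a]
  | 2 => [AB.b]
  | k + 3 =>
      (if (k + 1) % 2 = 1 then AB.a else AB.b) :: (sseq d (k + 2)).dropLast

/-- The standard morphism σ associated with a type (i) Sturm number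
α = [0;1+d₁,\overline{d₂,…,dₙ}] : σ(a) = sₙ₋₁, σ(b) = sₙ₋₁^{dₙ−d₁} sₙ₋₂. -/
def sigmaGen (d : ℕ → ℕ) (n : ℕ) : AB → List AB
  | AB.a => sseq d n
  | AB.b => lpow (sseq d n) (d n - d 1) ++ sseq d (n - 1)

/-- The directive sequence of α = [0;2,\overline{r}] : d₁ = 1, dᵢ = r for i ≥ 2. -/
def dseq (r : ℕ) : ℕ → ℕ := fun i => if i ≤ 1 then 1 else r

/-- The directive sequence of 1 − α = [0;1,d₁,\overline{d₂,…,dₙ}] obtained from that of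
α = [0;1+d₁,\overline{d₂,…,dₙ}] : ê₁ = 0 and êᵢ = dᵢ₋₁ for i ≥ 2. -/
def dhat (d : ℕ → ℕ) : ℕ → ℕ := fun i => if i ≤ 1 then 0 else d (i - 1)

/-- `Generates ψ c x` : ψ is prolongable on the letter c and x = ψ^ω(c), i.e. every
ψ^m(c) is a prefix of x. -/
def Generates (ψ : AB → List AB) (c : AB) (x : ℕ → AB) : Prop :=
  (∃ w : List AB, w ≠ [] ∧ ψ c = c :: w) ∧ ∀ m, PrefInf (mpow ψ m c) x

/-- Fibonacci numbers, shifted: `fibw k = F_{k-1}`, so fibw 0 = F₋₁ = 1,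
fibw 1 = F₀ = 1, Fₙ = Fₙ₋₁ + Fₙ₋₂. -/
def fibw : ℕ → ℕ
  | 0 => 1
  | 1 => 1
  | n + 2 => fibw (n + 1) + fibw n

/-- `HasCF γ a` : γ has continued fraction expansion [0; a 1, a 2, a 3, …]. -/
def HasCF (γ : ℝ) (a : ℕ → ℕ) : Prop :=
  ∃ x : ℕ → ℝ, x 0 = γ ∧ (∀ i, 0 < x i ∧ x i < 1) ∧
    ∀ i, 1 / x i = (a (i + 1) : ℝ) + x (i + 1)

/-- γ has a continued fraction expansion of type (i):
γ = [0;1+d₁,\overline{d₂,…,dₙ}] < 1/2 with dₙ ≥ d₁ ≥ 1. -/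
def CFTypeI (γ : ℝ) : Prop :=
  ∃ a : ℕ → ℕ, HasCF γ a ∧ γ < 1 / 2 ∧
    ∃ n : ℕ, 2 ≤ n ∧ ∃ d : ℕ → ℕ,
      (∀ i, 1 ≤ i → 1 ≤ d i) ∧ a 1 = 1 + d 1 ∧ (∀ i, 2 ≤ i → a i = d i) ∧
      (∀ i, 2 ≤ i → d (i + (n - 1)) = d i) ∧ d 1 ≤ d n

/-- γ has a continued fraction expansion of type (ii):
γ = [0;1,d₁,\overline{d₂,…,dₙ}] > 1/2 with dₙ ≥ d₁. -/
def CFTypeII (γ : ℝ) : Prop :=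
  ∃ a : ℕ → ℕ, HasCF γ a ∧ 1 / 2 < γ ∧
    ∃ n : ℕ, 2 ≤ n ∧ ∃ d : ℕ → ℕ,
      (∀ i, 1 ≤ i → 1 ≤ d i) ∧ a 1 = 1 ∧ (∀ i, 2 ≤ i → a i = d (i - 1)) ∧
      (∀ i, 2 ≤ i → d (i + (n - 1)) = d i) ∧ d 1 ≤ d n

/-- A Sturm number: an irrational γ ∈ (0,1) whose continued fraction expansion is of
type (i) or type (ii). -/
def IsSturmNumber (γ : ℝ) : Prop :=
  Irrational γ ∧ 0 < γ ∧ γ < 1 ∧ (CFTypeI γ ∨ CFTypeII γ)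


namespace Stmt16Aux

lemma applyM_append (g : AB → List AB) (w1 w2 : List AB) :
    applyM g (w1 ++ w2) = applyM g w1 ++ applyM g w2 :=
  List.flatMap_append

lemma applyM_singleton (g : AB → List AB) (c : AB) : applyM g [c] = g c := by
  simp [applyM]

lemma applyM_comp (g h : AB → List AB) (w : List AB) :
    applyM (compM g h) w = applyM g (applyM h w) := by
  induction w with
  | nil => rfl
  | cons c t ih =>
      show compM g h c ++ applyM (compM g h) t = applyM g (applyM h (c :: t))
      rw [ih]
      show applyM g (h c) ++ applyM g (applyM h t) = _
      rw [← applyM_append]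
      congr 1

lemma applyM_id (w : List AB) : applyM (fun c => [c]) w = w := by
  simp [applyM]

lemma standard_nonerasing {ψ : AB → List AB} (h : IsStandard ψ) :
    ∀ c, 1 ≤ (ψ c).length := by
  induction h with
  | id => intro c; simp
  | @compE ψ' _ ih =>
      intro c
      have : compM ψ' Em c = applyM ψ' (Em c) := rfl
      cases c <;>
        simpa [this, Em, applyM_singleton] using ih _
  | @compPhi ψ' _ ih =>
      intro c
      have h2 : compM ψ' phim c = applyM ψ' (phim c) := rfl
      cases c
      · have : applyM ψ' [AB.a, AB.b] = ψ' AB.a ++ ψ' AB.b := by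
          simp [applyM]
        rw [h2]
        show 1 ≤ (applyM ψ' (phim AB.a)).length
        have hA := ih AB.a
        simp only [phim, this]
        rw [List.length_append]; omega
      · rw [h2]
        show 1 ≤ (applyM ψ' (phim AB.b)).length
        simpa [phim, applyM_singleton] using ih AB.a

lemma length_applyM_ge {g : AB → List AB} (hg : ∀ c, 1 ≤ (g c).length)
    (w : List AB) : w.length ≤ (applyM g w).length := by
  induction w with
  | nil => simp [applyM]
  | cons c t ih =>
      have : applyM g (c :: t) = g c ++ applyM g t := by
        simp [applyM]
      rw [this, List.length_append, List.length_cons]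
      have := hg c
      omega

lemma mpow_succ_apply (g : AB → List AB) (n : ℕ) (c : AB) :
    mpow g (n + 1) c = applyM g (mpow g n c) := rfl

lemma mpow_comm (g : AB → List AB) (n : ℕ) (w : List AB) :
    applyM g (applyM (mpow g n) w) = applyM (mpow g n) (applyM g w) := by
  induction n with
  | zero =>
      show applyM g (applyM (mpow g 0) w) = applyM (mpow g 0) (applyM g w)
      have h0 : ∀ v, applyM (mpow g 0) v = v := fun v => applyM_id v
      rw [h0, h0]
  | succ n ih =>
      have hc : ∀ v, applyM (mpow g (n + 1)) v = applyM g (applyM (mpow g n) v) :=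
        fun v => applyM_comp g (mpow g n) v
      rw [hc, hc, ih, ← applyM_comp, ← applyM_comp]

lemma mpow_nonerasing {g : AB → List AB} (hg : ∀ c, 1 ≤ (g c).length) (n : ℕ) :
    ∀ c, 1 ≤ (mpow g n c).length := by
  induction n with
  | zero => intro c; simp [mpow]
  | succ n ih =>
      intro c
      have : mpow g (n + 1) c = applyM g (mpow g n c) := rfl
      rw [this]
      calc 1 ≤ (mpow g n c).length := ih c
        _ ≤ _ := length_applyM_ge hg _

lemma mpow_length_ge {ψ : AB → List AB} (hg : ∀ c, 1 ≤ (ψ c).length)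
    {l : AB} {w0 : List AB} (hw0 : w0 ≠ []) (hψl : ψ l = l :: w0) (m : ℕ) :
    m + 1 ≤ (mpow ψ m l).length := by
  induction m with
  | zero => simp [mpow]
  | succ m ih =>
      have h1 : mpow ψ (m + 1) l = applyM (mpow ψ m) (ψ l) := by
        rw [mpow_succ_apply]
        have : mpow ψ m l = applyM (mpow ψ m) [l] := (applyM_singleton _ _).symm
        rw [this, mpow_comm, applyM_singleton]
      rw [h1, hψl]
      have h2 : applyM (mpow ψ m) (l :: w0) = mpow ψ m l ++ applyM (mpow ψ m) w0 := by
        have : (l :: w0) = [l] ++ w0 := rfl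
        rw [this, applyM_append, applyM_singleton]
      rw [h2, List.length_append]
      have h3 : w0.length ≤ (applyM (mpow ψ m) w0).length :=
        length_applyM_ge (mpow_nonerasing hg m) w0
      have h4 : 1 ≤ w0.length := List.length_pos_iff.mpr hw0
      omega

lemma prefInf_eq_map {u : List AB} {x : ℕ → AB} (h : PrefInf u x) :
    u = (List.range u.length).map x := by
  apply List.ext_getElem
  · simp
  · intro i h1 h2
    have := h i h1
    rw [List.getD_eq_getElem u AB.a h1] at this
    simp [this.symm]

lemma prefInf_mono {p q : List AB} {x : ℕ → AB} (hpq : p <+: q) (h : PrefInf q x) :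
    PrefInf p x := by
  obtain ⟨t, rfl⟩ := hpq
  intro i hi
  rw [← h i (by rw [List.length_append]; omega)]
  rw [List.getD_append _ _ _ _ hi]

lemma prefInf_range (x : ℕ → AB) (n : ℕ) : PrefInf ((List.range n).map x) x := by
  intro i hi
  simp only [List.length_map, List.length_range] at hi
  rw [List.getD_eq_getElem _ AB.a (by simpa using hi)]
  simp

end Stmt16Aux

/-- If the infinite word x is generated by a standard morphism ψ and
0 ≤ k ≤ |ψ(ab)| − 2, then the k-th right conjugate ψ_k of ψ satisfies ψ_k(x) = v⁻¹x,
where v is the prefix of x of length k (i.e. ψ_k(x) deletes the first k letters of x). -/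

theorem statement16 (ψ : AB → List AB) (hψ : IsStandard ψ)
    (l : AB) (x : ℕ → AB) (hx : Generates ψ l x)
    (k : ℕ) (hk : k ≤ (applyM ψ [AB.a, AB.b]).length - 2)
    (ξ : AB → List AB) (hξ : IsRightConj ψ ξ k) :
    applyInf ξ x = fun i => x (i + k) := by
  classical
  open Stmt16Aux in
  obtain ⟨u, hulen, hconj⟩ := hξ
  obtain ⟨⟨w0, hw0ne, hψl⟩, hpref⟩ := hx
  have hne : ∀ c, 1 ≤ (ψ c).length := standard_nonerasing hψ
  funext i
  show applyInf ξ x i = x (i + k)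
  set N := i + 1 + k with hN
  set wN : List AB := (List.range N).map x with hwN
  -- ψ(wN) is a prefix of x
  have hψwN : PrefInf (applyM ψ wN) x := by
    -- find m with |mpow ψ m l| ≥ N
    have hm : N ≤ (mpow ψ N l).length := by
      have := mpow_length_ge hne hw0ne hψl N
      omega
    -- wN is a prefix of mpow ψ N l
    have hwpre : wN <+: mpow ψ N l := by
      have h1 : mpow ψ N l = (List.range (mpow ψ N l).length).map x :=
        prefInf_eq_map (hpref N)
      have hwl : wN.length = N := by simp [hwN]
      rw [List.prefix_iff_eq_take, hwl, h1, ← List.map_take, List.take_range,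
        Nat.min_eq_left hm]
    have h2 : applyM ψ wN <+: applyM ψ (mpow ψ N l) := by
      obtain ⟨t, ht⟩ := hwpre
      exact ⟨applyM ψ t, by rw [← applyM_append, ht]⟩
    have h3 : applyM ψ (mpow ψ N l) = mpow ψ (N + 1) l := rfl
    rw [h3] at h2
    exact prefInf_mono h2 (hpref (N + 1))
  have hlenψ : N ≤ (applyM ψ wN).length := by
    calc N = wN.length := by simp [hwN]
      _ ≤ _ := length_applyM_ge hne wN
  -- the key conjugacy identity on wN
  have hcN := hconj wN
  -- applyInf at i reads inside applyM ξ w1 where w1 = prefix of length i+1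
  set w1 : List AB := (List.range (i + 1)).map x with hw1
  set rest : List AB := (List.range k).map (fun j => x (i + 1 + j)) with hrest
  have hsplit : wN = w1 ++ rest := by
    rw [hwN, hN, List.range_add, List.map_append, hw1, hrest, List.map_map]
    rfl
  have hlen1 : i + 1 ≤ (applyM ξ w1).length := by
    have hc1 := hconj w1
    have : (applyM ψ w1).length + u.length = u.length + (applyM ξ w1).length := by
      rw [← List.length_append, ← List.length_append, hc1]
    have h4 : i + 1 ≤ (applyM ψ w1).length := by
      calc i + 1 = w1.length := by simp [hw1]
        _ ≤ _ := length_applyM_ge hne w1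
    omega
  have hgoal : applyInf ξ x i = (applyM ξ wN).getD i AB.a := by
    show (applyM ξ ((List.range (i + 1)).map x)).getD i AB.a = _
    rw [← hw1, hsplit, applyM_append, List.getD_append _ _ _ _ (by omega)]
  rw [hgoal]
  -- now read position k + i of both sides of hcN
  have hki : (applyM ξ wN).getD i AB.a = (u ++ applyM ξ wN).getD (k + i) AB.a := by
    have hlt : i < (applyM ξ wN).length := by
      have : (applyM ψ wN).length + u.length = u.length + (applyM ξ wN).length := by
        rw [← List.length_append, ← List.length_append, hcN]
      omega
    rw [List.getD_eq_getElem _ AB.a hlt,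
        List.getD_eq_getElem _ AB.a (by rw [List.length_append]; omega)]
    have huk : u.length = k := hulen
    rw [List.getElem_append_right (show u.length ≤ k + i by omega)]
    congr 1
    omega
  rw [hki, ← hcN]
  have hlt2 : k + i < (applyM ψ wN).length := by omega
  rw [List.getD_append _ _ _ _ hlt2]
  have := hψwN (k + i) hlt2
  rw [this]
  congr 1
  omega
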